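/- For every positive integer n, 8 * (∑_{k=1}^n L_{4k}^3) = F_{2n} * L_{2n+2} * (5 * L_{2n} * F_{2n+2} * F_{4n+2} + 32). -/

import Mathlib

open Finset

def L : ℕ → ℤ
  | 0 => 2
  | 1 => 1
  | n + 2 => L (n + 1) + L n

def F (n : ℕ) : ℤ := Nat.fib n

lemma L_fib : ∀ m : ℕ, L m = 2 * (Nat.fib (m + 1) : ℤ) - Nat.fib m
  | 0 => by simp [L]
  | 1 => by simp [L]
  | (m + 2) => by
    rw [L, L_fib (m + 1), L_fib m, show m + 1 + 1 = m + 2 from rfl,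
      show m + 2 + 1 = m + 1 + 2 from rfl, Nat.fib_add_two (n := m + 1),
      Nat.fib_add_two (n := m)]
    push_cast
    ring

lemma fa (m k : ℕ) : (Nat.fib (m + k + 1) : ℤ) =
    Nat.fib m * Nat.fib k + Nat.fib (m + 1) * Nat.fib (k + 1) := by
  exact_mod_cast Nat.fib_add m k

lemma cassini : ∀ m : ℕ, ((Nat.fib (m + 1) : ℤ)) ^ 2 - Nat.fib m * Nat.fib (m + 2) = (-1) ^ m
  | 0 => by simp
  | (m + 1) => by
    have ih := cassini m
    rw [show m + 1 + 2 = m + 1 + 2 from rfl, Nat.fib_add_two (n := m + 1),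
      Nat.fib_add_two (n := m)]
    push_cast [Nat.fib_add_two (n := m)] at ih ⊢
    rw [pow_succ]
    linear_combination (-1 : ℤ) * ih

theorem stmt19 (n : ℕ) (hn : 0 < n) :
    8 * ∑ k ∈ Finset.Icc 1 n, L (4 * k) ^ 3 =
      F (2 * n) * L (2 * n + 2) * (5 * L (2 * n) * F (2 * n + 2) * F (4 * n + 2) + 32) := by
  induction n, hn using Nat.le_induction with
  | base =>
    rw [Finset.Icc_self, Finset.sum_singleton]
    show 8 * L 4 ^ 3 = F 2 * L 4 * (5 * L 2 * F 4 * F 6 + 32)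
    have hL2 : L 2 = 3 := rfl
    have hL4 : L 4 = 7 := rfl
    have hF2 : F 2 = 1 := rfl
    have hF4 : F 4 = 3 := rfl
    have hF6 : F 6 = 8 := rfl
    rw [hL2, hL4, hF2, hF4, hF6]; norm_num
  | succ n hn ih =>
    rw [Finset.sum_Icc_succ_top (by omega : 1 ≤ n + 1), mul_add, ih]
    rw [show 2 * (n + 1) = 2 * n + 2 from by ring, show 4 * (n + 1) = 4 * n + 4 from by ring,
      show 2 * n + 2 + 2 = 2 * n + 4 from rfl, show 4 * n + 4 + 2 = 4 * n + 6 from rfl]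
    simp only [F, L_fib]
    set a : ℤ := (Nat.fib (2 * n) : ℤ) with ha
    set b : ℤ := (Nat.fib (2 * n + 1) : ℤ) with hb
    have f2 : (Nat.fib (2 * n + 2) : ℤ) = a + b := by
      rw [Nat.fib_add_two (n := 2 * n)]; push_cast; ring
    have f3 : (Nat.fib (2 * n + 3) : ℤ) = a + 2 * b := by
      rw [show 2 * n + 3 = 2 * n + 1 + 2 from rfl, Nat.fib_add_two (n := 2 * n + 1)]
      push_cast
      rw [show 2 * n + 1 + 1 = 2 * n + 2 from rfl, f2]; ring
    have f4 : (Nat.fib (2 * n + 4) : ℤ) = 2 * a + 3 * b := by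
      rw [show 2 * n + 4 = 2 * n + 2 + 2 from rfl, Nat.fib_add_two (n := 2 * n + 2)]
      push_cast
      rw [f2, show 2 * n + 2 + 1 = 2 * n + 3 from rfl, f3]; ring
    have f5 : (Nat.fib (2 * n + 5) : ℤ) = 3 * a + 5 * b := by
      rw [show 2 * n + 5 = 2 * n + 3 + 2 from rfl, Nat.fib_add_two (n := 2 * n + 3)]
      push_cast
      rw [f3, show 2 * n + 3 + 1 = 2 * n + 4 from rfl, f4]; ring
    have g2 : (Nat.fib (4 * n + 2) : ℤ) = a * b + b * (a + b) := by
      rw [show 4 * n + 2 = 2 * n + (2 * n + 1) + 1 from by ring, fa]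
      rw [show 2 * n + 1 + 1 = 2 * n + 2 from rfl, f2, ← ha, ← hb]
    have g4 : (Nat.fib (4 * n + 4) : ℤ) = b * (a + b) + (a + b) * (a + 2 * b) := by
      rw [show 4 * n + 4 = (2 * n + 1) + (2 * n + 2) + 1 from by ring, fa]
      rw [show 2 * n + 1 + 1 = 2 * n + 2 from rfl, show 2 * n + 2 + 1 = 2 * n + 3 from rfl,
        f2, f3, ← hb]
    have g5 : (Nat.fib (4 * n + 5) : ℤ) = (a + b) ^ 2 + (a + 2 * b) ^ 2 := by
      rw [show 4 * n + 5 = (2 * n + 2) + (2 * n + 2) + 1 from by ring, fa]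
      rw [show 2 * n + 2 + 1 = 2 * n + 3 from rfl, f2, f3]; ring
    have g6 : (Nat.fib (4 * n + 6) : ℤ) = (a + b) * (a + 2 * b) + (a + 2 * b) * (2 * a + 3 * b) := by
      rw [show 4 * n + 6 = (2 * n + 2) + (2 * n + 3) + 1 from by ring, fa]
      rw [show 2 * n + 2 + 1 = 2 * n + 3 from rfl, show 2 * n + 3 + 1 = 2 * n + 4 from rfl,
        f2, f3, f4]
    have hcas : b ^ 2 = a ^ 2 + a * b + 1 := by
      have h := cassini (2 * n)
      rw [show (2 * n : ℕ) + 2 = 2 * n + 2 from rfl, f2, ← ha, ← hb] at h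
      have : ((-1 : ℤ)) ^ (2 * n) = 1 := by
        rw [pow_mul]; norm_num
      rw [this] at h
      linear_combination h
    rw [show 4 * n + 4 + 1 = 4 * n + 5 from rfl, f2, f3, f4, f5, g2, g4, g5, g6]
    linear_combination (-(96 * a ^ 4 + 352 * a ^ 3 * b + 384 * a ^ 2 * b ^ 2 - 96 * a ^ 2
      - 32 * a * b ^ 3 - 256 * a * b - 224 * b ^ 4 - 224 * b ^ 2)) * hcas
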